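/- V(F_m) ~ c₁ λ₁^m as m → ∞ for some constant c₁ > 0, where λ₁ ≈ 2.48 is the greatest root of x^3 − 2x^2 − 2x + 2; i.e., V(F_m)/λ₁^m converges to a positive limit. -/

import Mathlib

/-- Number of representations of `n` as a sum of distinct Fibonacci numbers. -/
noncomputable def R (n : ℕ) : ℕ :=
  Nat.card {s : Finset ℕ // (∀ x ∈ s, 0 < x ∧ ∃ m, Nat.fib m = x) ∧ ∑ x ∈ s, x = n}

noncomputable def A (H : ℕ) : ℕ := ∑ n ∈ Finset.range (H + 1), R n

noncomputable def V (H : ℕ) : ℕ := ∑ n ∈ Finset.range (H + 1), (R n) ^ 2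
def Qf : ℕ → ℕ → ℕ
  | 0, n => if n = 0 then 1 else 0
  | (j+1), n => Qf j n + if Nat.fib (j+2) ≤ n then Qf j (n - Nat.fib (j+2)) else 0

lemma Qf_zero (j : ℕ) : Qf j 0 = 1 := by
  induction j with
  | zero => rfl
  | succ j ih =>
    have h : ¬ (Nat.fib (j+2) ≤ 0) := by
      have := Nat.fib_pos.mpr (show 0 < j+2 by omega); omega
    simp [Qf, h, ih]

lemma Qf_support : ∀ j n, Nat.fib (j+3) ≤ n + 1 → Qf j n = 0 := by
  intro j
  induction j with
  | zero =>
    intro n hn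
    have h3 : Nat.fib (0+3) = 2 := by decide
    have : n ≠ 0 := by omega
    simp [Qf, this]
  | succ j ih =>
    intro n hn
    have he : j+1+3 = j+4 := rfl
    rw [he] at hn
    have hadd : Nat.fib (j+4) = Nat.fib (j+2) + Nat.fib (j+3) := Nat.fib_add_two
    have hpos : 0 < Nat.fib (j+2) := Nat.fib_pos.mpr (by omega)
    have h1 : Qf j n = 0 := ih n (by omega)
    show Qf j n + (if Nat.fib (j+2) ≤ n then Qf j (n - Nat.fib (j+2)) else 0) = 0
    rw [h1]
    by_cases h : Nat.fib (j+2) ≤ n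
    · rw [if_pos h, ih (n - Nat.fib (j+2)) (by omega)]
    · rw [if_neg h]

lemma fib_lt_fib {a b : ℕ} (ha : 2 ≤ a) (hab : a < b) : Nat.fib a < Nat.fib b :=
  lt_of_lt_of_le (Nat.fib_lt_fib_succ ha) (Nat.fib_mono hab)

def FV (j : ℕ) : Finset ℕ := (Finset.Icc 2 (j+1)).image Nat.fib

lemma FV_succ (j : ℕ) : FV (j+1) = insert (Nat.fib (j+2)) (FV j) := by
  unfold FV
  have : Finset.Icc 2 (j+2) = insert (j+2) (Finset.Icc 2 (j+1)) := by
    ext x; simp [Finset.mem_Icc, Finset.mem_insert]; omega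
  rw [this, Finset.image_insert]

lemma fib_not_mem_FV (j : ℕ) : Nat.fib (j+2) ∉ FV j := by
  simp only [FV, Finset.mem_image, Finset.mem_Icc, not_exists]
  rintro k ⟨⟨hk2, hkj⟩, hkfib⟩
  exact absurd hkfib (ne_of_lt (fib_lt_fib hk2 (by omega)))

lemma card_filter_sum (j n : ℕ) :
    ((FV j).powerset.filter (fun s => ∑ x ∈ s, x = n)).card = Qf j n := by
  induction j generalizing n with
  | zero =>
    have hFV : FV 0 = ∅ := by
      unfold FV
      have : Finset.Icc 2 1 = (∅ : Finset ℕ) := Finset.Icc_eq_empty (by omega)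
      rw [this, Finset.image_empty]
    rw [hFV, Finset.powerset_empty, Finset.filter_singleton]
    by_cases h : n = 0
    · subst h
      rw [if_pos (by simp)]
      simp [Qf]
    · rw [if_neg (by simpa using (by omega : ¬ (0 : ℕ) = n))]
      simp [Qf, h]
  | succ j ih =>
    set a := Nat.fib (j+2) with ha_def
    have ha : a ∉ FV j := fib_not_mem_FV j
    rw [FV_succ, Finset.powerset_insert, Finset.filter_union]
    have hdisj : Disjoint
        ((FV j).powerset.filter (fun s => ∑ x ∈ s, x = n))
        (((FV j).powerset.image (insert a)).filter (fun s => ∑ x ∈ s, x = n)) := by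
      rw [Finset.disjoint_left]
      intro u hu1 hu2
      simp only [Finset.mem_filter, Finset.mem_powerset, Finset.mem_image] at hu1 hu2
      obtain ⟨v, hv, hva⟩ := hu2.1
      apply ha
      apply hu1.1
      rw [← hva]; exact Finset.mem_insert_self a v
    rw [Finset.card_union_of_disjoint hdisj]
    have himg : (((FV j).powerset.image (insert a)).filter (fun s => ∑ x ∈ s, x = n)).card
        = ((FV j).powerset.filter (fun s => a + ∑ x ∈ s, x = n)).card := by
      rw [Finset.filter_image]
      rw [Finset.card_image_of_injOn]
      · congr 1
        apply Finset.filter_congr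
        intro s hs
        simp only [Finset.mem_powerset] at hs
        have hanotin : a ∉ s := fun h => ha (hs h)
        rw [Finset.sum_insert hanotin]
      · intro v1 hv1 v2 hv2 heq
        simp only [Finset.coe_filter, Set.mem_setOf_eq, Finset.mem_powerset] at hv1 hv2
        have h1 : a ∉ v1 := fun h => ha (hv1.1 h)
        have h2 : a ∉ v2 := fun h => ha (hv2.1 h)
        rw [← Finset.erase_insert h1, ← Finset.erase_insert h2, heq]
    rw [himg]
    show _ = Qf (j+1) n
    rw [show Qf (j+1) n = Qf j n + (if a ≤ n then Qf j (n - a) else 0) from rfl, ih]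
    congr 1
    by_cases h : a ≤ n
    · rw [if_pos h, ← ih (n - a)]
      congr 1
      apply Finset.filter_congr
      intro s _
      constructor <;> intro he <;> omega
    · rw [if_neg h]
      rw [Finset.card_eq_zero, Finset.filter_eq_empty_iff]
      intro s _
      omega

lemma R_eq_Qf {j n : ℕ} (hj : 1 ≤ j) (hn : n < Nat.fib (j+2)) : R n = Qf j n := by
  rw [← card_filter_sum]
  unfold R
  have hiff : ∀ s : Finset ℕ,
      ((∀ x ∈ s, 0 < x ∧ ∃ m, Nat.fib m = x) ∧ ∑ x ∈ s, x = n)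
      ↔ s ∈ (FV j).powerset.filter (fun s => ∑ x ∈ s, x = n) := by
    intro s
    simp only [Finset.mem_filter, Finset.mem_powerset]
    constructor
    · rintro ⟨hall, hsum⟩
      refine ⟨?_, hsum⟩
      intro x hx
      obtain ⟨hxpos, m, hm⟩ := hall x hx
      have hxle : x ≤ n := by
        calc x ≤ ∑ y ∈ s, y := Finset.single_le_sum (fun i _ => Nat.zero_le i) hx
        _ = n := hsum
      simp only [FV, Finset.mem_image, Finset.mem_Icc]
      rcases Nat.lt_or_ge m 2 with hm2 | hm2
      · -- m = 0 or 1 : x = fib m; fib 0 = 0 contradiction; fib 1 = 1 = fib 2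
        interval_cases m
        · exfalso; rw [Nat.fib_zero] at hm; omega
        · exact ⟨2, ⟨le_refl 2, by omega⟩, by rw [← hm]; decide⟩
      · rcases Nat.lt_or_ge (j+1) m with hmj | hmj
        · exfalso
          have : Nat.fib (j+2) ≤ Nat.fib m := Nat.fib_mono (by omega)
          omega
        · exact ⟨m, ⟨hm2, hmj⟩, hm⟩
    · rintro ⟨hsub, hsum⟩
      refine ⟨?_, hsum⟩
      intro x hx
      have := hsub hx
      simp only [FV, Finset.mem_image, Finset.mem_Icc] at this
      obtain ⟨k, ⟨hk2, _⟩, hk⟩ := this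
      exact ⟨by rw [← hk]; exact Nat.fib_pos.mpr (by omega), k, hk⟩
  rw [Nat.card_congr (Equiv.subtypeEquivRight hiff)]
  simp only [Nat.card_eq_fintype_card]
  exact Fintype.card_coe _

lemma sum_range_ext (g : ℕ → ℕ) (K N M : ℕ) (hg : ∀ n, K ≤ n → g n = 0) (hN : K ≤ N) (hM : K ≤ M) :
    ∑ n ∈ Finset.range N, g n = ∑ n ∈ Finset.range M, g n := by
  have h : ∀ L, K ≤ L → ∑ n ∈ Finset.range L, g n = ∑ n ∈ Finset.range K, g n := by
    intro L hL
    exact (Finset.sum_subset (Finset.range_subset_range.2 hL)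
      (fun x _ hx => hg x (Nat.le_of_not_lt (by simpa using hx)))).symm
  rw [h N hN, h M hM]

lemma sum_range_shift (g : ℕ → ℕ) (f N : ℕ) (h : f ≤ N) :
    ∑ n ∈ Finset.range N, (if f ≤ n then g (n - f) else 0) = ∑ k ∈ Finset.range (N - f), g k := by
  rw [Finset.range_eq_Ico, ← Finset.sum_Ico_consecutive _ (Nat.zero_le f) h]
  have h1 : ∑ n ∈ Finset.Ico 0 f, (if f ≤ n then g (n - f) else 0) = 0 :=
    Finset.sum_eq_zero (by intro n hn; rw [Finset.mem_Ico] at hn; rw [if_neg (by omega)])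
  rw [h1, zero_add, Finset.sum_Ico_eq_sum_range]
  apply Finset.sum_congr rfl
  intro k _
  rw [if_pos (by omega), Nat.add_sub_cancel_left]

def xS (j : ℕ) : ℕ := ∑ n ∈ Finset.range (Nat.fib (j+3)), Qf j n * Qf j n
def yS (j : ℕ) : ℕ := ∑ n ∈ Finset.range (Nat.fib (j+3)), Qf j (n + Nat.fib (j+2)) * Qf j n
def zS (j : ℕ) : ℕ := ∑ n ∈ Finset.range (Nat.fib (j+3)), Qf j (n + Nat.fib (j+1)) * Qf j n
def cS (j : ℕ) : ℕ := ∑ n ∈ Finset.range (Nat.fib (j+2) + 1), Qf j n * Qf j n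

lemma xS_succ (j : ℕ) : xS (j+1) = 2 * xS j + 2 * yS j := by
  have hf : Nat.fib (j+4) = Nat.fib (j+2) + Nat.fib (j+3) := Nat.fib_add_two
  have hsupp : ∀ n, Nat.fib (j+3) ≤ n → Qf j n = 0 := fun n hn => Qf_support j n (by omega)
  have key : ∀ n ∈ Finset.range (Nat.fib (j+4)),
      Qf (j+1) n * Qf (j+1) n
        = Qf j n * Qf j n
          + ((if Nat.fib (j+2) ≤ n then Qf j ((n - Nat.fib (j+2)) + Nat.fib (j+2)) * Qf j (n - Nat.fib (j+2)) else 0)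
            + ((if Nat.fib (j+2) ≤ n then Qf j ((n - Nat.fib (j+2)) + Nat.fib (j+2)) * Qf j (n - Nat.fib (j+2)) else 0)
              + (if Nat.fib (j+2) ≤ n then Qf j (n - Nat.fib (j+2)) * Qf j (n - Nat.fib (j+2)) else 0))) := by
    intro n _
    show (Qf j n + if Nat.fib (j+2) ≤ n then Qf j (n - Nat.fib (j+2)) else 0)
        * (Qf j n + if Nat.fib (j+2) ≤ n then Qf j (n - Nat.fib (j+2)) else 0) = _
    by_cases h : Nat.fib (j+2) ≤ n
    · simp only [if_pos h, Nat.sub_add_cancel h]; ring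
    · simp only [if_neg h]; ring
  have goal1 : xS (j+1) = ∑ n ∈ Finset.range (Nat.fib (j+4)), Qf (j+1) n * Qf (j+1) n := rfl
  rw [goal1, Finset.sum_congr rfl key, Finset.sum_add_distrib, Finset.sum_add_distrib,
      Finset.sum_add_distrib]
  have hS1 : ∑ n ∈ Finset.range (Nat.fib (j+4)), Qf j n * Qf j n = xS j :=
    sum_range_ext _ (Nat.fib (j+3)) _ _ (fun n hn => by rw [hsupp n hn, zero_mul]) (by omega) le_rfl
  have hsh : ∑ n ∈ Finset.range (Nat.fib (j+4)),
      (if Nat.fib (j+2) ≤ n then Qf j ((n - Nat.fib (j+2)) + Nat.fib (j+2)) * Qf j (n - Nat.fib (j+2)) else 0)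
      = yS j := by
    rw [sum_range_shift (fun k => Qf j (k + Nat.fib (j+2)) * Qf j k) (Nat.fib (j+2)) _ (by omega),
        show Nat.fib (j+4) - Nat.fib (j+2) = Nat.fib (j+3) by omega]
    rfl
  have hS3 : ∑ n ∈ Finset.range (Nat.fib (j+4)),
      (if Nat.fib (j+2) ≤ n then Qf j (n - Nat.fib (j+2)) * Qf j (n - Nat.fib (j+2)) else 0)
      = xS j := by
    rw [sum_range_shift (fun k => Qf j k * Qf j k) (Nat.fib (j+2)) _ (by omega),
        show Nat.fib (j+4) - Nat.fib (j+2) = Nat.fib (j+3) by omega]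
    rfl
  rw [hS1, hsh, hS3]
  ring

lemma yS_succ (j : ℕ) : yS (j+1) = zS j := by
  have hf : Nat.fib (j+3) = Nat.fib (j+1) + Nat.fib (j+2) := Nat.fib_add_two
  have hf4 : Nat.fib (j+4) = Nat.fib (j+2) + Nat.fib (j+3) := Nat.fib_add_two
  have hsupp : ∀ n, Nat.fib (j+3) ≤ n + 1 → Qf j n = 0 := Qf_support j
  have key : ∀ n ∈ Finset.range (Nat.fib (j+4)),
      Qf (j+1) (n + Nat.fib (j+3)) * Qf (j+1) n = Qf j (n + Nat.fib (j+1)) * Qf j n := by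
    intro n _
    show (Qf j (n + Nat.fib (j+3)) + if Nat.fib (j+2) ≤ n + Nat.fib (j+3) then Qf j (n + Nat.fib (j+3) - Nat.fib (j+2)) else 0)
        * (Qf j n + if Nat.fib (j+2) ≤ n then Qf j (n - Nat.fib (j+2)) else 0) = _
    rw [if_pos (by omega), show n + Nat.fib (j+3) - Nat.fib (j+2) = n + Nat.fib (j+1) by omega,
        hsupp (n + Nat.fib (j+3)) (by omega)]
    by_cases h : Nat.fib (j+2) ≤ n
    · rw [if_pos h, hsupp (n + Nat.fib (j+1)) (by omega)]; ring
    · rw [if_neg h]; ring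
  have goal1 : yS (j+1) = ∑ n ∈ Finset.range (Nat.fib (j+4)), Qf (j+1) (n + Nat.fib (j+3)) * Qf (j+1) n := rfl
  rw [goal1, Finset.sum_congr rfl key]
  exact sum_range_ext _ (Nat.fib (j+3)) _ _
    (fun n hn => by rw [hsupp n (by omega), mul_zero]) (by omega) le_rfl

lemma zS_succ (j : ℕ) : zS (j+1) = xS j + 2 * yS j := by
  have hf : Nat.fib (j+3) = Nat.fib (j+1) + Nat.fib (j+2) := Nat.fib_add_two
  have hf4 : Nat.fib (j+4) = Nat.fib (j+2) + Nat.fib (j+3) := Nat.fib_add_two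
  have hm12 : Nat.fib (j+1) ≤ Nat.fib (j+2) := Nat.fib_mono (by omega)
  have hsupp : ∀ n, Nat.fib (j+3) ≤ n + 1 → Qf j n = 0 := Qf_support j
  have key : ∀ n ∈ Finset.range (Nat.fib (j+4)),
      Qf (j+1) (n + Nat.fib (j+2)) * Qf (j+1) n
        = Qf j (n + Nat.fib (j+2)) * Qf j n + (Qf j n * Qf j n
          + (if Nat.fib (j+2) ≤ n then Qf j ((n - Nat.fib (j+2)) + Nat.fib (j+2)) * Qf j (n - Nat.fib (j+2)) else 0)) := by
    intro n _
    show (Qf j (n + Nat.fib (j+2)) + if Nat.fib (j+2) ≤ n + Nat.fib (j+2) then Qf j (n + Nat.fib (j+2) - Nat.fib (j+2)) else 0)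
        * (Qf j n + if Nat.fib (j+2) ≤ n then Qf j (n - Nat.fib (j+2)) else 0) = _
    rw [if_pos (Nat.le_add_left _ _), Nat.add_sub_cancel]
    by_cases h : Nat.fib (j+2) ≤ n
    · rw [if_pos h, if_pos h, Nat.sub_add_cancel h, hsupp (n + Nat.fib (j+2)) (by omega)]; ring
    · rw [if_neg h, if_neg h]; ring
  have goal1 : zS (j+1) = ∑ n ∈ Finset.range (Nat.fib (j+4)), Qf (j+1) (n + Nat.fib (j+2)) * Qf (j+1) n := rfl
  rw [goal1, Finset.sum_congr rfl key, Finset.sum_add_distrib, Finset.sum_add_distrib]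
  have hSy : ∑ n ∈ Finset.range (Nat.fib (j+4)), Qf j (n + Nat.fib (j+2)) * Qf j n = yS j :=
    sum_range_ext _ (Nat.fib (j+3)) _ _ (fun n hn => by rw [hsupp n (by omega), mul_zero]) (by omega) le_rfl
  have hSx : ∑ n ∈ Finset.range (Nat.fib (j+4)), Qf j n * Qf j n = xS j :=
    sum_range_ext _ (Nat.fib (j+3)) _ _ (fun n hn => by rw [hsupp n (by omega), mul_zero]) (by omega) le_rfl
  have hsh : ∑ n ∈ Finset.range (Nat.fib (j+4)),
      (if Nat.fib (j+2) ≤ n then Qf j ((n - Nat.fib (j+2)) + Nat.fib (j+2)) * Qf j (n - Nat.fib (j+2)) else 0)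
      = yS j := by
    rw [sum_range_shift (fun k => Qf j (k + Nat.fib (j+2)) * Qf j k) (Nat.fib (j+2)) _ (by omega),
        show Nat.fib (j+4) - Nat.fib (j+2) = Nat.fib (j+3) by omega]
    rfl
  rw [hSy, hSx, hsh]
  ring

lemma cS_succ (j : ℕ) (hj : 1 ≤ j) : cS (j+1) = xS j + 2 * yS j + V (Nat.fib (j+1)) := by
  have hf : Nat.fib (j+3) = Nat.fib (j+1) + Nat.fib (j+2) := Nat.fib_add_two
  have hsupp : ∀ n, Nat.fib (j+3) ≤ n + 1 → Qf j n = 0 := Qf_support j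
  have key : ∀ n ∈ Finset.range (Nat.fib (j+3) + 1),
      Qf (j+1) n * Qf (j+1) n
        = Qf j n * Qf j n
          + ((if Nat.fib (j+2) ≤ n then Qf j ((n - Nat.fib (j+2)) + Nat.fib (j+2)) * Qf j (n - Nat.fib (j+2)) else 0)
            + ((if Nat.fib (j+2) ≤ n then Qf j ((n - Nat.fib (j+2)) + Nat.fib (j+2)) * Qf j (n - Nat.fib (j+2)) else 0)
              + (if Nat.fib (j+2) ≤ n then Qf j (n - Nat.fib (j+2)) * Qf j (n - Nat.fib (j+2)) else 0))) := by
    intro n _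
    show (Qf j n + if Nat.fib (j+2) ≤ n then Qf j (n - Nat.fib (j+2)) else 0)
        * (Qf j n + if Nat.fib (j+2) ≤ n then Qf j (n - Nat.fib (j+2)) else 0) = _
    by_cases h : Nat.fib (j+2) ≤ n
    · simp only [if_pos h, Nat.sub_add_cancel h]; ring
    · simp only [if_neg h]; ring
  have goal1 : cS (j+1) = ∑ n ∈ Finset.range (Nat.fib (j+3) + 1), Qf (j+1) n * Qf (j+1) n := rfl
  rw [goal1, Finset.sum_congr rfl key, Finset.sum_add_distrib, Finset.sum_add_distrib,
      Finset.sum_add_distrib]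
  have hS1 : ∑ n ∈ Finset.range (Nat.fib (j+3) + 1), Qf j n * Qf j n = xS j :=
    sum_range_ext _ (Nat.fib (j+3)) _ _ (fun n hn => by rw [hsupp n (by omega), zero_mul]) (by omega) le_rfl
  have hsh : ∑ n ∈ Finset.range (Nat.fib (j+3) + 1),
      (if Nat.fib (j+2) ≤ n then Qf j ((n - Nat.fib (j+2)) + Nat.fib (j+2)) * Qf j (n - Nat.fib (j+2)) else 0)
      = yS j := by
    rw [sum_range_shift (fun k => Qf j (k + Nat.fib (j+2)) * Qf j k) (Nat.fib (j+2)) _ (by omega),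
        show Nat.fib (j+3) + 1 - Nat.fib (j+2) = Nat.fib (j+1) + 1 by omega]
    exact sum_range_ext _ (Nat.fib (j+1)) _ _
      (fun k hk => by rw [hsupp (k + Nat.fib (j+2)) (by omega), zero_mul]) (by omega)
      (by have : Nat.fib (j+1) ≤ Nat.fib (j+3) := Nat.fib_mono (by omega); omega)
  have hS3 : ∑ n ∈ Finset.range (Nat.fib (j+3) + 1),
      (if Nat.fib (j+2) ≤ n then Qf j (n - Nat.fib (j+2)) * Qf j (n - Nat.fib (j+2)) else 0)
      = V (Nat.fib (j+1)) := by
    rw [sum_range_shift (fun k => Qf j k * Qf j k) (Nat.fib (j+2)) _ (by omega),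
        show Nat.fib (j+3) + 1 - Nat.fib (j+2) = Nat.fib (j+1) + 1 by omega]
    unfold V
    apply Finset.sum_congr rfl
    intro n hn
    rw [Finset.mem_range] at hn
    have hlt : n < Nat.fib (j+2) := by
      have : Nat.fib (j+1) < Nat.fib (j+2) := Nat.fib_lt_fib_succ (by omega)
      omega
    rw [R_eq_Qf hj hlt, pow_two]
  rw [hS1, hsh, hS3]
  ring

lemma V_fib_succ3 (j : ℕ) : V (Nat.fib (j+3)) + 1 = cS (j+1) + 2 * R (Nat.fib (j+3)) := by
  have hlt4 : Nat.fib (j+3) < Nat.fib (j+4) := Nat.fib_lt_fib_succ (by omega)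
  have h2 : R (Nat.fib (j+3)) = Qf (j+1) (Nat.fib (j+3)) + 1 := by
    have e : R (Nat.fib (j+3)) = Qf (j+2) (Nat.fib (j+3)) := R_eq_Qf (by omega) hlt4
    rw [e]
    show Qf (j+1) (Nat.fib (j+3))
        + (if Nat.fib (j+3) ≤ Nat.fib (j+3) then Qf (j+1) (Nat.fib (j+3) - Nat.fib (j+3)) else 0) = _
    rw [if_pos le_rfl, Nat.sub_self, Qf_zero]
  have h1 : V (Nat.fib (j+3)) = cS (j+1) + 2 * Qf (j+1) (Nat.fib (j+3)) + 1 := by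
    unfold V
    have key : ∀ n ∈ Finset.range (Nat.fib (j+3) + 1),
        R n ^ 2
          = Qf (j+1) n * Qf (j+1) n
            + ((if Nat.fib (j+3) ≤ n then Qf (j+1) ((n - Nat.fib (j+3)) + Nat.fib (j+3)) * Qf (j+1) (n - Nat.fib (j+3)) else 0)
              + ((if Nat.fib (j+3) ≤ n then Qf (j+1) ((n - Nat.fib (j+3)) + Nat.fib (j+3)) * Qf (j+1) (n - Nat.fib (j+3)) else 0)
                + (if Nat.fib (j+3) ≤ n then Qf (j+1) (n - Nat.fib (j+3)) * Qf (j+1) (n - Nat.fib (j+3)) else 0))) := by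
      intro n hn
      rw [Finset.mem_range] at hn
      rw [R_eq_Qf (show 1 ≤ j+2 by omega) (show n < Nat.fib (j+4) by omega), pow_two]
      show (Qf (j+1) n + if Nat.fib (j+3) ≤ n then Qf (j+1) (n - Nat.fib (j+3)) else 0)
          * (Qf (j+1) n + if Nat.fib (j+3) ≤ n then Qf (j+1) (n - Nat.fib (j+3)) else 0) = _
      by_cases h : Nat.fib (j+3) ≤ n
      · simp only [if_pos h, Nat.sub_add_cancel h]; ring
      · simp only [if_neg h]; ring
    rw [Finset.sum_congr rfl key, Finset.sum_add_distrib, Finset.sum_add_distrib,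
        Finset.sum_add_distrib]
    have hS1 : ∑ n ∈ Finset.range (Nat.fib (j+3) + 1), Qf (j+1) n * Qf (j+1) n = cS (j+1) := rfl
    have hsh : ∑ n ∈ Finset.range (Nat.fib (j+3) + 1),
        (if Nat.fib (j+3) ≤ n then Qf (j+1) ((n - Nat.fib (j+3)) + Nat.fib (j+3)) * Qf (j+1) (n - Nat.fib (j+3)) else 0)
        = Qf (j+1) (Nat.fib (j+3)) := by
      rw [sum_range_shift (fun k => Qf (j+1) (k + Nat.fib (j+3)) * Qf (j+1) k) (Nat.fib (j+3)) _ (by omega),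
          Nat.add_sub_cancel_left, Finset.sum_range_one, Nat.zero_add, Qf_zero, mul_one]
    have hS3 : ∑ n ∈ Finset.range (Nat.fib (j+3) + 1),
        (if Nat.fib (j+3) ≤ n then Qf (j+1) (n - Nat.fib (j+3)) * Qf (j+1) (n - Nat.fib (j+3)) else 0)
        = 1 := by
      rw [sum_range_shift (fun k => Qf (j+1) k * Qf (j+1) k) (Nat.fib (j+3)) _ (by omega),
          Nat.add_sub_cancel_left, Finset.sum_range_one, Qf_zero]
    rw [hS1, hsh, hS3]
    omega
  omega

lemma R_fib_step (k : ℕ) : R (Nat.fib (k+4)) = R (Nat.fib (k+2)) + 1 := by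
  have hf : Nat.fib (k+4) = Nat.fib (k+2) + Nat.fib (k+3) := Nat.fib_add_two
  have h1 : R (Nat.fib (k+4)) = Qf (k+3) (Nat.fib (k+4)) :=
    R_eq_Qf (by omega) (show Nat.fib (k+4) < Nat.fib (k+5) from Nat.fib_lt_fib_succ (by omega))
  have h2 : Qf (k+3) (Nat.fib (k+4)) = Qf (k+2) (Nat.fib (k+4)) + 1 := by
    show Qf (k+2) (Nat.fib (k+4))
        + (if Nat.fib (k+4) ≤ Nat.fib (k+4) then Qf (k+2) (Nat.fib (k+4) - Nat.fib (k+4)) else 0) = _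
    rw [if_pos le_rfl, Nat.sub_self, Qf_zero]
  have h3 : Qf (k+2) (Nat.fib (k+4)) = Qf (k+1) (Nat.fib (k+2)) := by
    show Qf (k+1) (Nat.fib (k+4))
        + (if Nat.fib (k+3) ≤ Nat.fib (k+4) then Qf (k+1) (Nat.fib (k+4) - Nat.fib (k+3)) else 0) = _
    rw [if_pos (Nat.fib_mono (by omega)),
        Qf_support (k+1) (Nat.fib (k+4)) (show Nat.fib (k+4) ≤ Nat.fib (k+4) + 1 by omega),
        show Nat.fib (k+4) - Nat.fib (k+3) = Nat.fib (k+2) by omega, zero_add]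
  have h4 : Qf (k+1) (Nat.fib (k+2)) = R (Nat.fib (k+2)) :=
    (R_eq_Qf (by omega) (show Nat.fib (k+2) < Nat.fib (k+3) from Nat.fib_lt_fib_succ (by omega))).symm
  omega

lemma sum_Qf (j : ℕ) : ∑ n ∈ Finset.range (Nat.fib (j+3)), Qf j n = 2 ^ j := by
  induction j with
  | zero =>
    have h : Nat.fib (0+3) = 2 := by decide
    rw [h]
    decide
  | succ j ih =>
    have hf : Nat.fib (j+4) = Nat.fib (j+2) + Nat.fib (j+3) := Nat.fib_add_two
    have hsupp : ∀ n, Nat.fib (j+3) ≤ n + 1 → Qf j n = 0 := Qf_support j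
    have goal1 : ∑ n ∈ Finset.range (Nat.fib (j+1+3)), Qf (j+1) n
        = ∑ n ∈ Finset.range (Nat.fib (j+4)),
            (Qf j n + if Nat.fib (j+2) ≤ n then Qf j (n - Nat.fib (j+2)) else 0) := rfl
    rw [goal1, Finset.sum_add_distrib,
        sum_range_ext (fun n => Qf j n) (Nat.fib (j+3)) _ _ (fun n hn => hsupp n (by omega)) (by omega) le_rfl,
        sum_range_shift (fun k => Qf j k) (Nat.fib (j+2)) _ (by omega),
        show Nat.fib (j+4) - Nat.fib (j+2) = Nat.fib (j+3) by omega, ih]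
    ring

lemma xS_lower (j : ℕ) : 2 ^ j ≤ xS j := by
  rw [← sum_Qf j]
  apply Finset.sum_le_sum
  intro i _
  rcases Nat.eq_zero_or_pos (Qf j i) with h | h
  · rw [h]
  · exact Nat.le_mul_of_pos_left _ h

lemma xS_rec (j : ℕ) : xS (j+3) + 2 * xS j = 2 * xS (j+2) + 2 * xS (j+1) := by
  have e1 : xS (j+3) = 2 * xS (j+2) + 2 * yS (j+2) := xS_succ (j+2)
  have e2 : yS (j+2) = zS (j+1) := yS_succ (j+1)
  have e3 : zS (j+1) = xS j + 2 * yS j := zS_succ j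
  have e4 : xS (j+1) = 2 * xS j + 2 * yS j := xS_succ j
  omega

lemma V_rec (j : ℕ) : V (Nat.fib (j+4)) + 1 + xS (j+1)
    = xS (j+2) + V (Nat.fib (j+2)) + 2 * R (Nat.fib (j+4)) := by
  have e1 : V (Nat.fib (j+4)) + 1 = cS (j+2) + 2 * R (Nat.fib (j+4)) := V_fib_succ3 (j+1)
  have e2 : cS (j+2) = xS (j+1) + 2 * yS (j+1) + V (Nat.fib (j+2)) := cS_succ (j+1) (by omega)
  have e3 : xS (j+2) = 2 * xS (j+1) + 2 * yS (j+1) := xS_succ (j+1)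
  omega

lemma two_step {P : ℕ → Prop} (h0 : P 0) (h1 : P 1) (hstep : ∀ n, P n → P (n+1) → P (n+2)) :
    ∀ n, P n := by
  have key : ∀ n, P n ∧ P (n+1) := by
    intro n
    induction n with
    | zero => exact ⟨h0, h1⟩
    | succ n ih => exact ⟨ih.2, hstep n ih.1 ih.2⟩
  exact fun n => (key n).1

lemma R_fib_bounds : ∀ k, 1 ≤ R (Nat.fib (k+2)) ∧ R (Nat.fib (k+2)) ≤ k + 2 := by
  have hR1 : R 1 = 1 := by
    rw [R_eq_Qf (j := 1) le_rfl (by decide : (1:ℕ) < Nat.fib 3)]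
    decide
  have hR2 : R 2 = 1 := by
    rw [R_eq_Qf (j := 2) (by omega) (by decide : (2:ℕ) < Nat.fib 4)]
    decide
  apply two_step
  · show 1 ≤ R (Nat.fib 2) ∧ R (Nat.fib 2) ≤ 2
    rw [show Nat.fib 2 = 1 by decide, hR1]
    omega
  · show 1 ≤ R (Nat.fib 3) ∧ R (Nat.fib 3) ≤ 3
    rw [show Nat.fib 3 = 2 by decide, hR2]
    omega
  · intro n ⟨ha, hb⟩ _
    have e : R (Nat.fib (n+4)) = R (Nat.fib (n+2)) + 1 := R_fib_step n
    show 1 ≤ R (Nat.fib (n+4)) ∧ R (Nat.fib (n+4)) ≤ n + 4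
    omega

open Filter in
lemma tendsto_contract_zero {r : ℝ} (hr0 : 0 ≤ r) (hr1 : r < 1) (d e : ℕ → ℝ)
    (hd : ∀ k, d (k+1) = r * d k + e k) (he : Tendsto e atTop (nhds 0)) :
    Tendsto d atTop (nhds 0) := by
  rw [Metric.tendsto_atTop]
  intro ε hε
  have h1r : 0 < 1 - r := by linarith
  set ε' : ℝ := ε * (1 - r) / 4 with hε'def
  have hε' : 0 < ε' := by positivity
  obtain ⟨K, hK⟩ := (Metric.tendsto_atTop.1 he) ε' hε'
  have key : ∀ i, |d (K + i)| ≤ r ^ i * |d K| + ε' / (1 - r) := by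
    intro i
    induction i with
    | zero =>
      have : 0 ≤ ε' / (1 - r) := by positivity
      simpa using by linarith [le_refl |d K|]
    | succ i ih =>
      have e1 : d (K + i + 1) = r * d (K+i) + e (K+i) := hd (K+i)
      have e2 : |e (K+i)| ≤ ε' := by
        have := hK (K+i) (by omega)
        rw [Real.dist_eq, sub_zero] at this
        linarith
      have e3 : |d (K+i+1)| ≤ r * |d (K+i)| + |e (K+i)| := by
        rw [e1]
        refine (abs_add_le _ _).trans ?_
        rw [abs_mul, abs_of_nonneg hr0]
      have e4 : r * |d (K+i)| ≤ r * (r ^ i * |d K| + ε' / (1-r)) :=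
        mul_le_mul_of_nonneg_left ih hr0
      have e5 : r * (ε' / (1-r)) + ε' = ε' / (1-r) := by
        field_simp
        ring
      have e6 : r * (r ^ i * |d K| + ε' / (1-r)) = r * r ^ i * |d K| + r * (ε' / (1-r)) := by ring
      have e7 : r ^ (i+1) = r * r ^ i := by rw [pow_succ]; ring
      calc |d (K + (i+1))| = |d (K+i+1)| := by rw [show K + (i+1) = K+i+1 by omega]
        _ ≤ r * |d (K+i)| + |e (K+i)| := e3
        _ ≤ r ^ (i+1) * |d K| + ε' / (1-r) := by rw [e7]; linarith
  have hgeo : Tendsto (fun i => r ^ i * |d K|) atTop (nhds 0) := by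
    simpa using (tendsto_pow_atTop_nhds_zero_of_lt_one hr0 hr1).mul_const |d K|
  obtain ⟨I, hI⟩ := (Metric.tendsto_atTop.1 hgeo) (ε/4) (by positivity)
  refine ⟨K + I, fun m hm => ?_⟩
  have h1 : |d m| ≤ r ^ (m - K) * |d K| + ε' / (1 - r) := by
    have := key (m - K)
    rwa [show K + (m - K) = m by omega] at this
  have h2 : r ^ (m - K) * |d K| ≤ r ^ I * |d K| :=
    mul_le_mul_of_nonneg_right (pow_le_pow_of_le_one hr0 hr1.le (by omega)) (abs_nonneg _)
  have h3 : r ^ I * |d K| < ε/4 := by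
    have h := hI I le_rfl
    rw [Real.dist_eq, sub_zero] at h
    exact lt_of_le_of_lt (le_abs_self _) h
  have h4 : ε' / (1 - r) = ε / 4 := by
    rw [hε'def]
    field_simp
  rw [Real.dist_eq, sub_zero]
  linarith

open Filter in
lemma tendsto_contract {r : ℝ} (hr0 : 0 ≤ r) (hr1 : r < 1) (b s : ℕ → ℝ) (T : ℝ)
    (hrec : ∀ k, b (k+1) = r * b k + s k) (hs : Tendsto s atTop (nhds T)) :
    Tendsto b atTop (nhds (T / (1 - r))) := by
  have h1r : 0 < 1 - r := by linarith
  have hL : r * (T / (1 - r)) + T = T / (1 - r) := by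
    field_simp
    ring
  have hd : ∀ k, (fun k => b k - T / (1 - r)) (k+1)
      = r * (fun k => b k - T / (1 - r)) k + (s k - T) := by
    intro k
    simp only
    rw [hrec k]
    linarith
  have he : Tendsto (fun k => s k - T) atTop (nhds 0) := by
    simpa using hs.sub_const T
  have h0 := tendsto_contract_zero hr0 hr1 (fun k => b k - T / (1 - r)) (fun k => s k - T) hd he
  have h2 := h0.add_const (T / (1 - r))
  rw [zero_add] at h2
  have h3 : (fun k => b k - T / (1 - r) + T / (1 - r)) = b := by
    funext k; ring
  rwa [h3] at h2

open Filter in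
lemma tendsto_even_odd {f : ℕ → ℝ} {L : ℝ}
    (h0 : Tendsto (fun k => f (2*k)) atTop (nhds L))
    (h1 : Tendsto (fun k => f (2*k+1)) atTop (nhds L)) :
    Tendsto f atTop (nhds L) := by
  rw [Metric.tendsto_atTop] at h0 h1 ⊢
  intro ε hε
  obtain ⟨N0, hN0⟩ := h0 ε hε
  obtain ⟨N1, hN1⟩ := h1 ε hε
  refine ⟨2*N0 + 2*N1 + 2, fun m hm => ?_⟩
  rcases Nat.even_or_odd m with ⟨k, hk⟩ | ⟨k, hk⟩
  · have hmk : m = 2*k := by omega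
    rw [hmk]
    exact hN0 k (by omega)
  · have hmk : m = 2*k+1 := by omega
    rw [hmk]
    exact hN1 k (by omega)

set_option maxHeartbeats 2000000 in
open Filter in
theorem V_fib_asymptotic (l : ℝ)
    (hroot : l ^ 3 - 2 * l ^ 2 - 2 * l + 2 = 0)
    (hmax : ∀ x : ℝ, x ^ 3 - 2 * x ^ 2 - 2 * x + 2 = 0 → x ≤ l) :
    ∃ c : ℝ, 0 < c ∧
      Filter.Tendsto (fun m : ℕ => (V (Nat.fib m) : ℝ) / l ^ m) Filter.atTop (nhds c) := by
  -- bounds on l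
  have hl1 : (2.41:ℝ) ≤ l := by
    have hcont : ContinuousOn (fun x : ℝ => x^3 - 2*x^2 - 2*x + 2) (Set.Icc 2.41 2.5) :=
      Continuous.continuousOn (by continuity)
    have himg := intermediate_value_Icc (by norm_num : (2.41:ℝ) ≤ 2.5) hcont
    have h0mem : (0:ℝ) ∈ Set.Icc ((fun x : ℝ => x^3 - 2*x^2 - 2*x + 2) 2.41)
        ((fun x : ℝ => x^3 - 2*x^2 - 2*x + 2) 2.5) := by
      constructor <;> norm_num
    obtain ⟨ξ, hξmem, hξ⟩ := himg h0mem
    exact le_trans hξmem.1 (hmax ξ hξ)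
  have hl2 : l < 2.5 := by
    by_contra h
    push_neg at h
    nlinarith [hroot]
  have hl0 : (0:ℝ) < l := by linarith
  -- real versions of the sequences
  set X : ℕ → ℝ := fun j => (xS j : ℝ) with hXdef
  have hX3 : ∀ j, X (j+3) = 2 * X (j+2) + 2 * X (j+1) - 2 * X j := by
    intro j
    have hc : (xS (j+3) : ℝ) + 2 * (xS j : ℝ)
        = 2 * (xS (j+2) : ℝ) + 2 * (xS (j+1) : ℝ) := by exact_mod_cast xS_rec j
    simp only [hXdef]
    linarith
  set w : ℕ → ℝ := fun j => X (j+2) + (l-2) * X (j+1) + (l^2-2*l-2) * X j with hwdef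
  have hwrec : ∀ j, w (j+1) = l * w j := by
    intro j
    simp only [hwdef]
    linear_combination hX3 j - X j * hroot
  have hwgeo : ∀ j, w j = w 0 * l ^ j := by
    intro j
    induction j with
    | zero => simp
    | succ j ih => rw [hwrec j, ih]; ring
  have hD : (0:ℝ) < 3*l^2 - 4*l - 2 := by nlinarith
  set γ : ℝ := w 0 / (3*l^2 - 4*l - 2) with hγdef
  have hγD : γ * (3*l^2 - 4*l - 2) = w 0 := by
    rw [hγdef]
    exact div_mul_cancel₀ _ hD.ne'
  set u : ℕ → ℝ := fun j => X j - γ * l ^ j with hudef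
  have hurec : ∀ j, u (j+2) = -(l-2) * u (j+1) - (l^2-2*l-2) * u j := by
    intro j
    have h1 : w j = w 0 * l ^ j := hwgeo j
    simp only [hwdef] at h1
    simp only [hudef]
    linear_combination h1 - l ^ j * hγD
  set C : ℝ := |u 0| + |u 1| with hCdef
  have hC0 : 0 ≤ C := by rw [hCdef]; positivity
  have hb1 : |l - 2| ≤ 0.5 := by
    rw [abs_le]; constructor <;> nlinarith
  have hc1 : |l^2 - 2*l - 2| ≤ 1.04 := by
    rw [abs_le]; constructor <;> nlinarith
  have hub : ∀ j, |u j| ≤ C * 1.3 ^ j ∧ |u (j+1)| ≤ C * 1.3 ^ (j+1) := by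
    intro j
    induction j with
    | zero =>
      constructor
      · have : |u 0| ≤ C := by rw [hCdef]; linarith [abs_nonneg (u 1)]
        simpa using this
      · have h1 : |u 1| ≤ C := by rw [hCdef]; linarith [abs_nonneg (u 0)]
        have h2 : C ≤ C * 1.3 := by nlinarith
        rw [pow_one]
        linarith
    | succ j ih =>
      refine ⟨ih.2, ?_⟩
      have h1 : |u (j+2)| ≤ |l-2| * |u (j+1)| + |l^2-2*l-2| * |u j| := by
        rw [hurec j]
        have e : -(l-2) * u (j+1) - (l^2-2*l-2) * u j
            = (-(l-2)) * u (j+1) + (-(l^2-2*l-2)) * u j := by ring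
        rw [e]
        refine (abs_add_le _ _).trans ?_
        rw [abs_mul, abs_mul, abs_neg, abs_neg]
      have h2a : |l-2| * |u (j+1)| ≤ 0.5 * (C * 1.3 ^ (j+1)) :=
        mul_le_mul hb1 ih.2 (abs_nonneg _) (by norm_num)
      have h2b : |l^2-2*l-2| * |u j| ≤ 1.04 * (C * 1.3 ^ j) :=
        mul_le_mul hc1 ih.1 (abs_nonneg _) (by norm_num)
      have h3 : 0.5 * (C * 1.3 ^ (j+1)) + 1.04 * (C * 1.3 ^ j) = C * 1.3 ^ (j+2) := by
        ring
      have hgoal : |u (j+1+1)| ≤ C * 1.3 ^ (j+2) := by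
        have : |u (j+2)| ≤ C * 1.3 ^ (j+2) := by linarith
        exact this
      exact hgoal
  have hu0 : Tendsto (fun j => u j / l ^ j) atTop (nhds 0) := by
    apply squeeze_zero_norm (a := fun j => C * (1.3/l) ^ j)
    · intro j
      have hpow : (0:ℝ) < l ^ j := pow_pos hl0 j
      rw [Real.norm_eq_abs, abs_div, abs_of_pos hpow]
      have e : C * (1.3/l) ^ j = (C * 1.3 ^ j) / l ^ j := by
        rw [div_pow]; ring
      rw [e]
      exact (div_le_div_iff_of_pos_right hpow).mpr (hub j).1
    · have h13 : (0:ℝ) ≤ 1.3/l := by positivity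
      have h13' : (1.3:ℝ)/l < 1 := by rw [div_lt_one hl0]; linarith
      simpa using (tendsto_pow_atTop_nhds_zero_of_lt_one h13 h13').const_mul C
  have hXlim : Tendsto (fun j => X j / l ^ j) atTop (nhds γ) := by
    have e : (fun j => X j / l ^ j) = fun j => γ + u j / l ^ j := by
      funext j
      have hpow : l ^ j ≠ 0 := (pow_pos hl0 j).ne'
      simp only [hudef]
      field_simp
      ring
    rw [e]
    simpa using hu0.const_add γ
  -- positivity of γ
  have hXge : ∀ j, ((2:ℝ)) ^ j ≤ X j := by
    intro j
    have h := xS_lower j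
    have : ((2^j : ℕ) : ℝ) ≤ (xS j : ℝ) := by exact_mod_cast h
    simpa [hXdef] using this
  have hγpos : 0 < γ := by
    obtain ⟨J, hJ⟩ := pow_unbounded_of_one_lt (R := ℝ) C (by norm_num : (1:ℝ) < 2/1.3)
    have h3 : (0:ℝ) < 1.3 ^ J := by positivity
    have h1 : C * 1.3 ^ J < 2 ^ J := by
      rw [div_pow, lt_div_iff₀ h3] at hJ
      linarith
    have h4 : γ * l ^ J = X J - u J := by simp only [hudef]; ring
    have h5 : 0 < γ * l ^ J := by
      have hub' := (hub J).1
      have habs : u J ≤ C * 1.3 ^ J := le_trans (le_abs_self _) hub'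
      have hge := hXge J
      rw [h4]; linarith
    nlinarith [pow_pos hl0 J]
  -- the V recurrence over ℝ
  have hρ := R_fib_bounds
  have hVrecR : ∀ j, (V (Nat.fib (j+4)) : ℝ)
      = (V (Nat.fib (j+2)) : ℝ) + X (j+2) - X (j+1) + 2 * (R (Nat.fib (j+4)) : ℝ) - 1 := by
    intro j
    have hc : (V (Nat.fib (j+4)) : ℝ) + 1 + (xS (j+1) : ℝ)
        = (xS (j+2) : ℝ) + (V (Nat.fib (j+2)) : ℝ) + 2 * (R (Nat.fib (j+4)) : ℝ) := by
      exact_mod_cast V_rec j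
    simp only [hXdef]
    linarith
  set r : ℝ := 1 / l^2 with hrdef
  have hr0 : 0 ≤ r := by rw [hrdef]; positivity
  have hr1 : r < 1 := by
    rw [hrdef, div_lt_one (by positivity)]
    nlinarith
  set g : ℕ → ℝ := fun m => (X (m+2) - X (m+1) + 2 * (R (Nat.fib (m+4)) : ℝ) - 1) / l^(m+4) with hgdef
  have hrec4 : ∀ m, (V (Nat.fib (m+4)) : ℝ) / l ^ (m+4)
      = r * ((V (Nat.fib (m+2)) : ℝ) / l ^ (m+2)) + g m := by
    intro m
    simp only [hgdef, hrdef]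
    rw [hVrecR m]
    have h2 : l ^ (m+2) ≠ 0 := (pow_pos hl0 (m+2)).ne'
    field_simp
    ring
  -- the limit of g
  set T : ℝ := γ * (1/l^2) - γ * (1/l^3) with hTdef
  have hT : Tendsto g atTop (nhds T) := by
    have hsplit : g = fun m => (X (m+2)/l^(m+2)) * (1/l^2) - (X (m+1)/l^(m+1)) * (1/l^3)
        + (2 * (R (Nat.fib (m+4)) : ℝ) - 1) / l^(m+4) := by
      funext m
      simp only [hgdef]
      have h1 : l ^ (m+4) ≠ 0 := (pow_pos hl0 (m+4)).ne'
      have h2 : l ^ (m+2) ≠ 0 := (pow_pos hl0 (m+2)).ne'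
      have h3 : l ^ (m+1) ≠ 0 := (pow_pos hl0 (m+1)).ne'
      field_simp
      ring
    rw [hsplit]
    have t1 : Tendsto (fun m => (X (m+2)/l^(m+2)) * (1/l^2)) atTop (nhds (γ * (1/l^2))) :=
      ((tendsto_add_atTop_iff_nat 2).2 hXlim).mul_const _
    have t2 : Tendsto (fun m => (X (m+1)/l^(m+1)) * (1/l^3)) atTop (nhds (γ * (1/l^3))) :=
      ((tendsto_add_atTop_iff_nat 1).2 hXlim).mul_const _
    have t3 : Tendsto (fun m => (2 * (R (Nat.fib (m+4)) : ℝ) - 1) / l^(m+4)) atTop (nhds 0) := by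
      have hbound : ∀ m : ℕ, ‖(2 * (R (Nat.fib (m+4)) : ℝ) - 1) / l^(m+4)‖
          ≤ 3 * ((((m:ℝ)+4)) * (1/l)^(m+4)) := by
        intro m
        have hb' : R (Nat.fib (m+4)) ≤ m + 4 := (hρ (m+2)).2
        have hb1' : 1 ≤ R (Nat.fib (m+4)) := (hρ (m+2)).1
        have hcast : (1:ℝ) ≤ (R (Nat.fib (m+4)) : ℝ) := by exact_mod_cast hb1'
        have hcast2 : ((R (Nat.fib (m+4)) : ℝ)) ≤ (m:ℝ)+4 := by exact_mod_cast hb'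
        have hpow : (0:ℝ) < l ^ (m+4) := pow_pos hl0 _
        rw [Real.norm_eq_abs, abs_div, abs_of_pos hpow,
            abs_of_pos (by linarith : (0:ℝ) < 2 * (R (Nat.fib (m+4)) : ℝ) - 1)]
        rw [div_le_iff₀ hpow]
        have e : ((1:ℝ)/l)^(m+4) = 1/l^(m+4) := by rw [div_pow, one_pow]
        rw [e]
        have e2 : 3 * (((m:ℝ)+4) * (1/l^(m+4))) * l^(m+4) = 3 * ((m:ℝ)+4) := by
          field_simp
        rw [e2]
        linarith
      refine squeeze_zero_norm hbound ?_
      have hq1 : ‖(1/l : ℝ)‖ < 1 := by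
        rw [Real.norm_eq_abs, abs_of_pos (by positivity : (0:ℝ) < 1/l), div_lt_one hl0]
        linarith
      have hsum := (summable_pow_mul_geometric_of_norm_lt_one 1 hq1).tendsto_atTop_zero
      have hsum' : Tendsto (fun n : ℕ => (n:ℝ) * (1/l)^n) atTop (nhds 0) := by
        simpa [pow_one] using hsum
      have hshift := (tendsto_add_atTop_iff_nat 4).2 hsum'
      have hfin := hshift.const_mul (3:ℝ)
      rw [mul_zero] at hfin
      convert hfin using 2 with m
      push_cast
      ring
    have hfin := (t1.sub t2).add t3
    rw [add_zero] at hfin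
    exact hfin
  -- interleave the two parities
  set L : ℝ := T / (1 - r) with hLdef
  have hb0 : Tendsto (fun k => (V (Nat.fib (2*k+4)) : ℝ) / l ^ (2*k+4)) atTop (nhds L) := by
    apply tendsto_contract hr0 hr1 _ (fun k => g (2*k+2)) T
    · intro k
      have h := hrec4 (2*k+2)
      have e1 : 2*k+2+4 = 2*(k+1)+4 := by ring
      have e2 : 2*k+2+2 = 2*k+4 := by ring
      rw [e1, e2] at h
      exact h
    · have hmono : Tendsto (fun k : ℕ => 2*k+2) atTop atTop :=
        Filter.tendsto_atTop_mono (fun k => le_trans (Nat.le_add_right k (k+2)) (by omega)) Filter.tendsto_id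
      exact hT.comp hmono
  have hb1' : Tendsto (fun k => (V (Nat.fib (2*k+1+4)) : ℝ) / l ^ (2*k+1+4)) atTop (nhds L) := by
    apply tendsto_contract hr0 hr1 _ (fun k => g (2*k+3)) T
    · intro k
      have h := hrec4 (2*k+3)
      have e1 : 2*k+3+4 = 2*(k+1)+1+4 := by ring
      have e2 : 2*k+3+2 = 2*k+1+4 := by ring
      rw [e1, e2] at h
      exact h
    · have hmono : Tendsto (fun k : ℕ => 2*k+3) atTop atTop :=
        Filter.tendsto_atTop_mono (fun k => le_trans (Nat.le_add_right k (k+3)) (by omega)) Filter.tendsto_id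
      exact hT.comp hmono
  have hF : Tendsto (fun m => (V (Nat.fib (m+4)) : ℝ) / l ^ (m+4)) atTop (nhds L) :=
    tendsto_even_odd hb0 hb1'
  have hfinal : Tendsto (fun m : ℕ => (V (Nat.fib m) : ℝ) / l ^ m) atTop (nhds L) :=
    (tendsto_add_atTop_iff_nat 4).1 hF
  refine ⟨L, ?_, hfinal⟩
  have hTpos : 0 < T := by
    have e : T = γ * (l - 1) / l^3 := by
      rw [hTdef]
      field_simp
    rw [e]
    have : (0:ℝ) < l - 1 := by linarith
    positivity
  rw [hLdef]
  have : (0:ℝ) < 1 - r := by linarith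
  positivity
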